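/- For any real parameter d and any U ∈ SU(2), the quantum symmetric-profile payoff v(U) = |⟨Ψ00|U⊗U|Ψ⟩|² + d·(|⟨Ψ01|U⊗U|Ψ⟩|² + |⟨Ψ10|U⊗U|Ψ⟩|²)/2·2 satisfies: if d ≤ 2 then sup_U v(U) = 1, and if d > 2 then sup_U v(U) = d/2, and this is at least the classical maximum max_{p∈[0,1]} (p² + d·p(1-p)), with strict inequality when d > 2. -/

import Mathlib

/-- The maximally entangled state |Ψ⟩ = (|00⟩ + i|11⟩)/√2 as amplitudes. -/
noncomputable def PsiState : Fin 2 → Fin 2 → ℂ := fun k l =>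
  if k = 0 ∧ l = 0 then ((Real.sqrt 2)⁻¹ : ℝ)
  else if k = 1 ∧ l = 1 then Complex.I * ((Real.sqrt 2)⁻¹ : ℝ)
  else 0

/-- The EWL strategy U(θ,α,β). -/
noncomputable def EWLU (θ α β : ℝ) : Matrix (Fin 2) (Fin 2) ℂ :=
  !![Complex.exp (Complex.I * α) * Real.cos (θ/2),
     Complex.I * Complex.exp (Complex.I * β) * Real.sin (θ/2);
     Complex.I * Complex.exp (-(Complex.I * β)) * Real.sin (θ/2),
     Complex.exp (-(Complex.I * α)) * Real.cos (θ/2)]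

/-- Action of A ⊗ B on a two-qubit state. -/
noncomputable def tensorApply (A B : Matrix (Fin 2) (Fin 2) ℂ)
    (ψ : Fin 2 → Fin 2 → ℂ) : Fin 2 → Fin 2 → ℂ :=
  fun k l => ∑ k' : Fin 2, ∑ l' : Fin 2, A k k' * B l l' * ψ k' l'

/-- Inner product ⟨φ|ψ⟩ on ℂ²⊗ℂ². -/
noncomputable def inner2 (φ ψ : Fin 2 → Fin 2 → ℂ) : ℂ :=
  ∑ k : Fin 2, ∑ l : Fin 2, (starRingEnd ℂ) (φ k l) * ψ k l

/-- C₀ = I, C₁ = [[0,i],[i,0]]. -/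
noncomputable def Cop : Fin 2 → Matrix (Fin 2) (Fin 2) ℂ := fun k =>
  if k = 0 then 1 else !![0, Complex.I; Complex.I, 0]

/-- The basis states |Ψ_kl⟩ = (C_k ⊗ C_l)|Ψ⟩. -/
noncomputable def PsiBasis (k l : Fin 2) : Fin 2 → Fin 2 → ℂ :=
  tensorApply (Cop k) (Cop l) PsiState

/-- Quantum symmetric-profile payoff for the normalized game with parameter d. -/
noncomputable def vPay (d : ℝ) (U : Matrix (Fin 2) (Fin 2) ℂ) : ℝ :=
  ‖inner2 (PsiBasis 0 0) (tensorApply U U PsiState)‖ ^ 2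
    + d * (‖inner2 (PsiBasis 0 1) (tensorApply U U PsiState)‖ ^ 2
        + ‖inner2 (PsiBasis 1 0) (tensorApply U U PsiState)‖ ^ 2) / 2

section Aux
open Complex Matrix

lemma su2_form (U : Matrix (Fin 2) (Fin 2) ℂ) (hU : U ∈ Matrix.specialUnitaryGroup (Fin 2) ℂ) :
    ∃ a b : ℂ, Complex.normSq a + Complex.normSq b = 1 ∧
      U = !![a, b; -(starRingEnd ℂ) b, (starRingEnd ℂ) a] := by
  rw [Matrix.mem_specialUnitaryGroup_iff] at hU
  obtain ⟨hu, hdet⟩ := hU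
  have hu2 : U * star U = 1 := (Matrix.mem_unitaryGroup_iff).mp hu
  have hstar : star U = adjugate U := by
    calc star U = (adjugate U * U) * star U := by rw [Matrix.adjugate_mul, hdet, one_smul, Matrix.one_mul]
    _ = adjugate U * (U * star U) := by rw [Matrix.mul_assoc]
    _ = adjugate U := by rw [hu2, Matrix.mul_one]
  have h00 : (starRingEnd ℂ) (U 0 0) = U 1 1 := by
    have := congrFun (congrFun hstar 0) 0
    simpa [Matrix.adjugate_fin_two, Matrix.star_apply] using this
  have h01 : (starRingEnd ℂ) (U 1 0) = -U 0 1 := by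
    have := congrFun (congrFun hstar 0) 1
    simpa [Matrix.adjugate_fin_two, Matrix.star_apply] using this
  refine ⟨U 0 0, U 0 1, ?_, ?_⟩
  · have hd : U 0 0 * U 1 1 - U 0 1 * U 1 0 = 1 := by
      rw [← Matrix.det_fin_two]; exact hdet
    have h10 : U 1 0 = -(starRingEnd ℂ) (U 0 1) := by
      have := congrArg (starRingEnd ℂ) h01
      simpa using this
    rw [← h00, h10] at hd
    have := congrArg Complex.re hd
    simpa [Complex.normSq_apply, Complex.mul_re, Complex.conj_re, Complex.conj_im] using this
  · ext i j
    fin_cases i <;> fin_cases j <;> simp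
    · have := congrArg (starRingEnd ℂ) h01
      simpa using this
    · exact (h00).symm

lemma inner00 (a b : ℂ) :
    inner2 (PsiBasis 0 0) (tensorApply !![a, b; -(starRingEnd ℂ) b, (starRingEnd ℂ) a] !![a, b; -(starRingEnd ℂ) b, (starRingEnd ℂ) a] PsiState)
      = (1/2 : ℂ) * (a^2 + (starRingEnd ℂ) a^2 + Complex.I * (b^2 - (starRingEnd ℂ) b^2)) := by
  have hs : ((Real.sqrt 2)⁻¹ : ℂ) * ((Real.sqrt 2)⁻¹ : ℂ) = 1/2 := by
    norm_cast
    rw [← mul_inv]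
    rw [Real.mul_self_sqrt (by norm_num)]
    norm_num
  simp [inner2, PsiBasis, tensorApply, PsiState, Cop, Fin.sum_univ_two, Matrix.one_apply]
  linear_combination (a^2 + Complex.I*b^2 - Complex.I*((starRingEnd ℂ) b)^2 + ((starRingEnd ℂ) a)^2) * hs - ((starRingEnd ℂ) a)^2 * (((Real.sqrt 2 : ℝ) : ℂ))⁻¹^2 * Complex.I_sq

lemma inner01 (a b : ℂ) :
    inner2 (PsiBasis 0 1) (tensorApply !![a, b; -(starRingEnd ℂ) b, (starRingEnd ℂ) a] !![a, b; -(starRingEnd ℂ) b, (starRingEnd ℂ) a] PsiState)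
      = -(1/2 : ℂ) * (1 + Complex.I) * (Complex.I * b * (starRingEnd ℂ) a - a * (starRingEnd ℂ) b) := by
  have hs : ((Real.sqrt 2)⁻¹ : ℂ) * ((Real.sqrt 2)⁻¹ : ℂ) = 1/2 := by
    norm_cast
    rw [← mul_inv, Real.mul_self_sqrt (by norm_num)]
    norm_num
  simp [inner2, PsiBasis, tensorApply, PsiState, Cop, Fin.sum_univ_two, Matrix.one_apply]
  linear_combination (-(1+Complex.I) * (Complex.I*b*((starRingEnd ℂ) a) - a*((starRingEnd ℂ) b))) * hs + (((Real.sqrt 2 : ℝ):ℂ))⁻¹^2 * (Complex.I*b*((starRingEnd ℂ) a) - a*((starRingEnd ℂ) b)) * Complex.I_sq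

lemma inner10 (a b : ℂ) :
    inner2 (PsiBasis 1 0) (tensorApply !![a, b; -(starRingEnd ℂ) b, (starRingEnd ℂ) a] !![a, b; -(starRingEnd ℂ) b, (starRingEnd ℂ) a] PsiState)
      = -(1/2 : ℂ) * (1 + Complex.I) * (Complex.I * b * (starRingEnd ℂ) a - a * (starRingEnd ℂ) b) := by
  have hs : ((Real.sqrt 2)⁻¹ : ℂ) * ((Real.sqrt 2)⁻¹ : ℂ) = 1/2 := by
    norm_cast
    rw [← mul_inv, Real.mul_self_sqrt (by norm_num)]
    norm_num
  simp [inner2, PsiBasis, tensorApply, PsiState, Cop, Fin.sum_univ_two, Matrix.one_apply]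
  linear_combination (-(1+Complex.I) * (Complex.I*b*((starRingEnd ℂ) a) - a*((starRingEnd ℂ) b))) * hs + (((Real.sqrt 2 : ℝ):ℂ))⁻¹^2 * (Complex.I*b*((starRingEnd ℂ) a) - a*((starRingEnd ℂ) b)) * Complex.I_sq

lemma normSq_identity (a b : ℂ) :
    Complex.normSq (Complex.I*b*(starRingEnd ℂ) a - a*(starRingEnd ℂ) b)
      + Complex.normSq (a^2 + Complex.I*b^2)
      = (Complex.normSq a + Complex.normSq b)^2 := by
  simp only [Complex.normSq_apply, Complex.mul_re, Complex.mul_im, Complex.add_re,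
    Complex.add_im, Complex.sub_re, Complex.sub_im, Complex.conj_re, Complex.conj_im,
    Complex.I_re, Complex.I_im, pow_two]
  ring

lemma vPay_eq (d : ℝ) (a b : ℂ) (h : Complex.normSq a + Complex.normSq b = 1) :
    vPay d !![a, b; -(starRingEnd ℂ) b, (starRingEnd ℂ) a]
      = ((a^2 + Complex.I*b^2).re)^2
        + d * (1 - Complex.normSq (a^2 + Complex.I*b^2)) / 2 := by
  have h1 : (1/2 : ℂ) * (a^2 + (starRingEnd ℂ) a^2 + Complex.I * (b^2 - (starRingEnd ℂ) b^2))
      = (((a^2 + Complex.I*b^2).re : ℝ) : ℂ) := by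
    have h2 := Complex.add_conj (a^2 + Complex.I*b^2)
    have h3 : (starRingEnd ℂ) (a^2 + Complex.I*b^2)
        = (starRingEnd ℂ) a^2 - Complex.I * (starRingEnd ℂ) b^2 := by
      simp [map_add, _root_.map_mul, map_pow, Complex.conj_I]; ring
    rw [h3] at h2
    push_cast at h2 ⊢
    linear_combination (1/2) * h2
  rw [vPay, inner00, inner01, inner10, h1]
  rw [Complex.norm_real, Real.norm_eq_abs, _root_.sq_abs, Complex.sq_norm]
  have h4 : Complex.normSq (-(1/2 : ℂ) * (1 + Complex.I) * (Complex.I * b * (starRingEnd ℂ) a - a * (starRingEnd ℂ) b))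
      = 1/2 * Complex.normSq (Complex.I*b*(starRingEnd ℂ) a - a*(starRingEnd ℂ) b) := by
    rw [Complex.normSq_mul, Complex.normSq_mul]
    norm_num [Complex.normSq_apply]
  simp only [h4]
  have h5 := normSq_identity a b
  rw [h] at h5
  linear_combination (d/2) * h5

lemma mem_su2 (a b : ℂ) (h : Complex.normSq a + Complex.normSq b = 1) :
    !![a, b; -(starRingEnd ℂ) b, (starRingEnd ℂ) a] ∈ Matrix.specialUnitaryGroup (Fin 2) ℂ := by
  have h' : a * (starRingEnd ℂ) a + b * (starRingEnd ℂ) b = 1 := by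
    rw [Complex.mul_conj, Complex.mul_conj]
    exact_mod_cast congrArg (fun x : ℝ => (x : ℂ)) h
  rw [Matrix.mem_specialUnitaryGroup_iff]
  constructor
  · rw [Matrix.mem_unitaryGroup_iff]
    ext i j
    fin_cases i <;> fin_cases j <;>
      simp [Matrix.mul_apply, Fin.sum_univ_two, Matrix.star_apply, Matrix.one_apply] <;>
      · first
        | linear_combination h'
        | ring
  · rw [Matrix.det_fin_two]
    simp
    linear_combination h'

lemma su2_upper (d : ℝ) (a b : ℂ) (h : Complex.normSq a + Complex.normSq b = 1) :
    (a^2 + Complex.I*b^2).re^2 ≤ Complex.normSq (a^2 + Complex.I*b^2) ∧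
    Complex.normSq (a^2 + Complex.I*b^2) ≤ 1 := by
  constructor
  · rw [Complex.normSq_apply]
    nlinarith [sq_nonneg (a^2 + Complex.I*b^2).im]
  · have h1 : ‖a^2 + Complex.I*b^2‖ ≤ 1 := by
      calc ‖a^2 + Complex.I*b^2‖
          ≤ ‖a^2‖ + ‖Complex.I*b^2‖ := norm_add_le _ _
        _ = Complex.normSq a + Complex.normSq b := by
            rw [norm_pow, norm_mul, norm_pow, Complex.norm_I, one_mul,
              ← Complex.sq_norm a, ← Complex.sq_norm b]
        _ = 1 := h
    have h2 : (0:ℝ) ≤ ‖a^2 + Complex.I*b^2‖ := norm_nonneg _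
    rw [← Complex.sq_norm]
    nlinarith

lemma witness2 (d : ℝ) (h : ∀ a b : ℂ, Complex.normSq a + Complex.normSq b = 1 →
    vPay d !![a, b; -(starRingEnd ℂ) b, (starRingEnd ℂ) a]
      = ((a^2 + Complex.I*b^2).re)^2 + d * (1 - Complex.normSq (a^2 + Complex.I*b^2)) / 2) :
    ∃ U ∈ Matrix.specialUnitaryGroup (Fin 2) ℂ, vPay d U = d / 2 := by
  set a : ℂ := (1 - Complex.I)/2 with ha
  set b : ℂ := Complex.ofReal ((Real.sqrt 2)⁻¹) with hb
  have hs2 : ((Real.sqrt 2)⁻¹:ℝ)^2 = 1/2 := by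
    rw [inv_pow, Real.sq_sqrt (by norm_num : (2:ℝ) ≥ 0)]; norm_num
  have hb2 : (b:ℂ)^2 = 1/2 := by
    rw [hb]; norm_cast; rw [hs2]; norm_num
  have hna : Complex.normSq a = 1/2 := by
    rw [ha]; simp [Complex.normSq_apply, Complex.div_re, Complex.div_im, Complex.normSq_apply]
    norm_num
  have hnb : Complex.normSq b = 1/2 := by
    rw [hb, Complex.normSq_ofReal, ← pow_two, hs2]
  have hn : Complex.normSq a + Complex.normSq b = 1 := by rw [hna, hnb]; norm_num
  have hw : a^2 + Complex.I*b^2 = 0 := by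
    rw [hb2, ha]; linear_combination (1/4) * Complex.I_sq
  refine ⟨_, mem_su2 a b hn, ?_⟩
  rw [h a b hn, hw]
  simp

end Aux

open Complex Matrix in
theorem stmt_19 (d : ℝ) :
    (d ≤ 2 → IsGreatest
      {x : ℝ | ∃ U ∈ Matrix.specialUnitaryGroup (Fin 2) ℂ, x = vPay d U} 1) ∧
    (2 < d → IsGreatest
      {x : ℝ | ∃ U ∈ Matrix.specialUnitaryGroup (Fin 2) ℂ, x = vPay d U} (d/2)) ∧
    (∀ p ∈ Set.Icc (0:ℝ) 1,
      p^2 + d * p * (1 - p) ≤ if d ≤ 2 then 1 else d/2) ∧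
    (2 < d → ∀ p ∈ Set.Icc (0:ℝ) 1, p^2 + d * p * (1 - p) < d/2) := by
  refine ⟨?_, ?_, ?_, ?_⟩
  · intro hd
    constructor
    · refine ⟨_, mem_su2 1 0 (by simp), ?_⟩
      rw [vPay_eq d 1 0 (by simp)]
      norm_num
    · rintro x ⟨U, hU, rfl⟩
      obtain ⟨a, b, hn, rfl⟩ := su2_form U hU
      rw [vPay_eq d a b hn]
      obtain ⟨h1, h2⟩ := su2_upper d a b hn
      nlinarith [mul_nonneg (by linarith : (0:ℝ) ≤ 2 - d)
        (by linarith : (0:ℝ) ≤ 1 - Complex.normSq (a^2 + Complex.I*b^2))]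
  · intro hd
    constructor
    · obtain ⟨U, hU, hv⟩ := witness2 d (fun a b h => vPay_eq d a b h)
      exact ⟨U, hU, hv.symm⟩
    · rintro x ⟨U, hU, rfl⟩
      obtain ⟨a, b, hn, rfl⟩ := su2_form U hU
      rw [vPay_eq d a b hn]
      obtain ⟨h1, h2⟩ := su2_upper d a b hn
      have h0 : (0:ℝ) ≤ Complex.normSq (a^2 + Complex.I*b^2) := Complex.normSq_nonneg _
      nlinarith [mul_nonneg (by linarith : (0:ℝ) ≤ d - 2) h0]
  · rintro p ⟨hp0, hp1⟩
    split_ifs with hd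
    · nlinarith [mul_nonneg (mul_nonneg (by linarith : (0:ℝ) ≤ 2 - d) hp0)
        (by linarith : (0:ℝ) ≤ 1 - p), sq_nonneg (1 - p)]
    · push_neg at hd
      nlinarith [sq_nonneg (2*(d-1)*p - d),
        mul_pos (by linarith : (0:ℝ) < d) (by linarith : (0:ℝ) < d - 2)]
  · rintro hd p ⟨hp0, hp1⟩
    nlinarith [sq_nonneg (2*(d-1)*p - d),
      mul_pos (by linarith : (0:ℝ) < d) (by linarith : (0:ℝ) < d - 2)]
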